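/- Let S = K[t_1,…,t_s] be a polynomial ring over a field K and let I ⊊ m = (t_1,…,t_s) be a graded ideal of S with dim(S/I) = 0. Then the minimum socle degree s(I) = α((I : m)/I) of S/I is equal to the v-number v(I). -/

import Mathlib

open MvPolynomial Filter

noncomputable section

namespace GMDPaper

open scoped Classical

variable {K : Type*} [Field K] {s : ℕ}

/-- `I` is a graded (homogeneous) ideal of `S = K[t_1,…,t_s]`: it contains all
homogeneous components of its elements. -/
def IsGradedIdeal (I : Ideal (MvPolynomial (Fin s) K)) : Prop :=
  ∀ f ∈ I, ∀ d : ℕ, (MvPolynomial.homogeneousComponent d f) ∈ I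

/-- `I` is unmixed: all associated primes of `S/I` have the same height. -/
def Unmixed (I : Ideal (MvPolynomial (Fin s) K)) : Prop :=
  ∀ p q : PrimeSpectrum (MvPolynomial (Fin s) K),
    p.asIdeal ∈ associatedPrimes (MvPolynomial (Fin s) K) (MvPolynomial (Fin s) K ⧸ I) →
    q.asIdeal ∈ associatedPrimes (MvPolynomial (Fin s) K) (MvPolynomial (Fin s) K ⧸ I) →
    Order.height p = Order.height q

/-- The Krull dimension of a commutative ring, as a natural number. -/
def dimNat (R : Type*) [CommRing R] : ℕ :=
  WithTop.untopD 0 (WithBot.unbotD 0 (ringKrullDim R))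

/-- The Hilbert function of `S/I`: `H_I(d) = dim_K (S/I)_d = dim_K S_d/I_d`. -/
def hilbertFn (I : Ideal (MvPolynomial (Fin s) K)) (d : ℕ) : ℕ :=
  Module.finrank K
    ((MvPolynomial.homogeneousSubmodule (Fin s) K d).map
      (Ideal.Quotient.mkₐ K I).toLinearMap)

/-- The degree (multiplicity) of `S/I`: if `k = dim S/I = 0` it is `dim_K S/I`;
if `k ≥ 1` it is `(k-1)! ⬝ lim_{d→∞} H_I(d)/d^(k-1)`. -/
def degQ (I : Ideal (MvPolynomial (Fin s) K)) : ℝ :=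
  if dimNat (MvPolynomial (Fin s) K ⧸ I) = 0 then
    (Module.finrank K (MvPolynomial (Fin s) K ⧸ I) : ℝ)
  else
    (Nat.factorial (dimNat (MvPolynomial (Fin s) K ⧸ I) - 1) : ℝ) *
      limUnder atTop
        (fun d : ℕ => (hilbertFn I d : ℝ) /
          (d : ℝ) ^ (dimNat (MvPolynomial (Fin s) K ⧸ I) - 1))

/-- The irrelevant maximal ideal `m = (t_1, …, t_s)`. -/
def irrIdeal (K : Type*) [Field K] (s : ℕ) : Ideal (MvPolynomial (Fin s) K) :=
  Ideal.span (Set.range (MvPolynomial.X : Fin s → MvPolynomial (Fin s) K))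

/-- The v-number of `I`: the least `d ≥ 1` admitting `f ∈ S_d` and an associated
prime `p` of `I` with `(I : f) = p`. -/
def vnum (I : Ideal (MvPolynomial (Fin s) K)) : ℕ :=
  sInf {d : ℕ | 1 ≤ d ∧ ∃ f ∈ MvPolynomial.homogeneousSubmodule (Fin s) K d,
    ∃ p ∈ associatedPrimes (MvPolynomial (Fin s) K) (MvPolynomial (Fin s) K ⧸ I),
      Submodule.colon I (Ideal.span {f}) = p}

/-- `α((I : p)/I)`: the least degree of a nonzero homogeneous element of the graded
module `(I : p)/I`, i.e. the least `d` admitting a homogeneous `f` of degree `d`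
with `f ∈ (I : p)` and `f ∉ I`. -/
def alphaColon (I p : Ideal (MvPolynomial (Fin s) K)) : ℕ :=
  sInf {d : ℕ | ∃ f ∈ MvPolynomial.homogeneousSubmodule (Fin s) K d,
    f ∈ Submodule.colon I p ∧ f ∉ I}

attribute [local instance] MvPolynomial.gradedAlgebra

private lemma mem_colon_span_singleton {R : Type*} [CommRing R] {I : Ideal R} {f r : R} :
    r ∈ Submodule.colon I (Ideal.span {f}) ↔ r * f ∈ I := by
  rw [Ideal.colon_span, Submodule.mem_colon_singleton, smul_eq_mul]

private lemma mem_irr_iff {K : Type*} [Field K] {s : ℕ} (g : MvPolynomial (Fin s) K) :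
    g ∈ irrIdeal K s ↔ MvPolynomial.coeff 0 g = 0 := by
  rw [irrIdeal, ← Set.image_univ, MvPolynomial.mem_ideal_span_X_image]
  constructor
  · intro h
    by_contra hc
    obtain ⟨i, -, hi⟩ := h 0 (MvPolynomial.mem_support_iff.mpr hc)
    simp at hi
  · intro h m hm
    have hm0 : m ≠ 0 := by rintro rfl; exact (MvPolynomial.mem_support_iff.mp hm) h
    obtain ⟨i, hi⟩ := Finsupp.ne_iff.mp hm0
    exact ⟨i, Set.mem_univ i, by simpa using hi⟩

private lemma irr_isPrime {K : Type*} [Field K] {s : ℕ} : (irrIdeal K s).IsPrime := by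
  have h : irrIdeal K s = RingHom.ker (MvPolynomial.constantCoeff (σ := Fin s) (R := K)) := by
    ext g
    rw [mem_irr_iff, RingHom.mem_ker, MvPolynomial.constantCoeff_eq]
  rw [h]
  exact RingHom.ker_isPrime _

private lemma decompose_eq {K : Type*} [Field K] {s : ℕ} (r : MvPolynomial (Fin s) K) (i : ℕ) :
    (DirectSum.decompose (MvPolynomial.homogeneousSubmodule (Fin s) K) r i :
      MvPolynomial (Fin s) K) = MvPolynomial.homogeneousComponent i r :=
  MvPolynomial.decomposition.decompose'_apply r i

private lemma graded_isHomogeneous {K : Type*} [Field K] {s : ℕ}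
    {I : Ideal (MvPolynomial (Fin s) K)} (hgr : IsGradedIdeal I) :
    Ideal.IsHomogeneous (MvPolynomial.homogeneousSubmodule (Fin s) K) I := by
  intro i r hr
  rw [decompose_eq]
  exact hgr r hr i

private lemma homog_le_irr {K : Type*} [Field K] {s : ℕ}
    {J : Ideal (MvPolynomial (Fin s) K)}
    (hJ : Ideal.IsHomogeneous (MvPolynomial.homogeneousSubmodule (Fin s) K) J)
    (hJt : J ≠ ⊤) : J ≤ irrIdeal K s := by
  intro x hx
  rw [mem_irr_iff]
  by_contra hc
  have h0 := hJ 0 hx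
  rw [decompose_eq, MvPolynomial.homogeneousComponent_zero] at h0
  have h1 := J.mul_mem_left (MvPolynomial.C (MvPolynomial.coeff 0 x)⁻¹) h0
  rw [← map_mul, inv_mul_cancel₀ hc, map_one] at h1
  exact hJt (J.eq_top_iff_one.mpr h1)

private lemma no_chain {K : Type*} [Field K] {s : ℕ}
    {I : Ideal (MvPolynomial (Fin s) K)}
    (hdim : ringKrullDim (MvPolynomial (Fin s) K ⧸ I) = 0)
    {p q : Ideal (MvPolynomial (Fin s) K)} (hp : p.IsPrime) (hq : q.IsPrime)
    (hIp : I ≤ p) (hpq : p ≤ q) : p = q := by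
  by_contra hne
  have hlt : p < q := lt_of_le_of_ne hpq hne
  have hIq : I ≤ q := hIp.trans hpq
  have hfs : Function.Surjective (Ideal.Quotient.mk I) := Ideal.Quotient.mk_surjective
  have hker : RingHom.ker (Ideal.Quotient.mk I) = I := Ideal.mk_ker
  have hPprime : (p.map (Ideal.Quotient.mk I)).IsPrime :=
    Ideal.map_isPrime_of_surjective hfs (by rw [hker]; exact hIp)
  have hQprime : (q.map (Ideal.Quotient.mk I)).IsPrime :=
    Ideal.map_isPrime_of_surjective hfs (by rw [hker]; exact hIq)
  set P : PrimeSpectrum (MvPolynomial (Fin s) K ⧸ I) := ⟨_, hPprime⟩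
  set Q : PrimeSpectrum (MvPolynomial (Fin s) K ⧸ I) := ⟨_, hQprime⟩
  have hcp : Ideal.comap (Ideal.Quotient.mk I) (p.map (Ideal.Quotient.mk I)) = p := by
    rw [Ideal.comap_map_of_surjective _ hfs, ← RingHom.ker_eq_comap_bot, hker,
      sup_eq_left.mpr hIp]
  have hPQ : P < Q := by
    refine lt_of_le_of_ne (Ideal.map_mono hpq : P.asIdeal ≤ Q.asIdeal) ?_
    intro h
    apply hne
    have := congrArg (Ideal.comap (Ideal.Quotient.mk I)) (congrArg PrimeSpectrum.asIdeal h)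
    rw [hcp, Ideal.comap_map_of_surjective _ hfs, ← RingHom.ker_eq_comap_bot, hker,
      sup_eq_left.mpr hIq] at this
    exact this
  have hlen := Order.LTSeries.length_le_krullDim ((RelSeries.singleton _ P).snoc Q hPQ)
  have hlen1 : (((RelSeries.singleton _ P).snoc Q hPQ : LTSeries _)).length = 1 := rfl
  rw [hlen1] at hlen
  rw [show Order.krullDim (PrimeSpectrum (MvPolynomial (Fin s) K ⧸ I)) =
    ringKrullDim (MvPolynomial (Fin s) K ⧸ I) from rfl, hdim] at hlen
  exact absurd hlen (by decide)

private lemma prime_eq_irr {K : Type*} [Field K] {s : ℕ}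
    {I : Ideal (MvPolynomial (Fin s) K)} (hgr : IsGradedIdeal I)
    (hdim : ringKrullDim (MvPolynomial (Fin s) K ⧸ I) = 0)
    {p : Ideal (MvPolynomial (Fin s) K)} (hp : p.IsPrime) (hIp : I ≤ p) :
    p = irrIdeal K s := by
  have hIhom := graded_isHomogeneous hgr
  set 𝒜 := MvPolynomial.homogeneousSubmodule (Fin s) K with h𝒜
  set q := (p.homogeneousCore 𝒜).toIdeal with hqdef
  have hqp : q ≤ p := Ideal.toIdeal_homogeneousCore_le _ p
  have hqprime : q.IsPrime := hp.homogeneousCore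
  have hIq : I ≤ q := by
    intro a ha
    rw [← DirectSum.sum_support_decompose 𝒜 a]
    refine Ideal.sum_mem _ fun i _ => ?_
    exact Ideal.mem_homogeneousCore_of_homogeneous_of_mem
      ⟨i, SetLike.coe_mem _⟩ (hIp (hIhom i ha))
  have hq_eq_p : q = p := no_chain hdim hqprime hp hIq hqp
  have hq_le_irr : q ≤ irrIdeal K s :=
    homog_le_irr (Ideal.homogeneousCore 𝒜 p).isHomogeneous
      (fun h => hp.ne_top (by rw [← hq_eq_p, h]))
  exact no_chain hdim hp irr_isPrime hIp (hq_eq_p ▸ hq_le_irr)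
/-- For a graded ideal `I ⊊ m` with `dim(S/I) = 0`, the minimum socle
degree `s(I) = α((I : m)/I)` equals the v-number `v(I)`. -/
theorem socle_degree_eq_vnumber (K : Type*) [Field K] (s : ℕ)
    (I : Ideal (MvPolynomial (Fin s) K))
    (hgr : IsGradedIdeal I) (hIm : I < irrIdeal K s)
    (hdim : ringKrullDim (MvPolynomial (Fin s) K ⧸ I) = 0) :
    alphaColon I (irrIdeal K s) = vnum I := by
  classical
  have hm_ne_top : (irrIdeal K s) ≠ ⊤ := irr_isPrime.ne_top
  have hI_ne_top : I ≠ ⊤ := fun h => hm_ne_top (top_le_iff.mp (h ▸ hIm.le))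
  have hAss : ∀ p ∈ associatedPrimes (MvPolynomial (Fin s) K)
      (MvPolynomial (Fin s) K ⧸ I), p = irrIdeal K s := by
    rintro p ⟨hp, x, hx⟩
    refine prime_eq_irr hgr hdim hp ?_
    intro a ha
    rw [hx]
    apply Ideal.le_radical
    rw [Submodule.mem_colon_singleton, Submodule.mem_bot]
    obtain ⟨y, rfl⟩ := Ideal.Quotient.mk_surjective x
    rw [← Ideal.Quotient.mk_eq_mk, ← Submodule.Quotient.mk_smul,
      Submodule.Quotient.mk_eq_zero, smul_eq_mul]
    exact I.mul_mem_right y ha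
  have hmem : irrIdeal K s ∈ associatedPrimes (MvPolynomial (Fin s) K)
      (MvPolynomial (Fin s) K ⧸ I) := by
    have hnt : Nontrivial (MvPolynomial (Fin s) K ⧸ I) :=
      Ideal.Quotient.nontrivial_iff.mpr hI_ne_top
    obtain ⟨p, hp⟩ := associatedPrimes.nonempty (MvPolynomial (Fin s) K)
      (MvPolynomial (Fin s) K ⧸ I)
    exact hAss p hp ▸ hp
  unfold alphaColon vnum
  congr 1
  ext d
  simp only [Set.mem_setOf_eq]
  constructor
  · rintro ⟨f, hfd, hfc, hfI⟩
    have hf0 : f ≠ 0 := fun h => hfI (h ▸ I.zero_mem)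
    have hXmem : ∀ i : Fin s, (MvPolynomial.X i : MvPolynomial (Fin s) K) ∈ irrIdeal K s :=
      fun i => Ideal.subset_span ⟨i, rfl⟩
    have hd1 : 1 ≤ d := by
      rcases Nat.eq_zero_or_pos d with rfl | h
      · exfalso
        have hhom : MvPolynomial.IsHomogeneous f 0 :=
          (MvPolynomial.mem_homogeneousSubmodule _ _).mp hfd
        have hC : f = MvPolynomial.C (MvPolynomial.coeff 0 f) := by
          ext m
          rcases eq_or_ne m 0 with rfl | hm
          · simp
          · rw [hhom.coeff_eq_zero (by simpa [Finsupp.degree_eq_zero_iff] using hm),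
              MvPolynomial.coeff_C, if_neg (Ne.symm hm)]
        have hc0 : MvPolynomial.coeff 0 f ≠ 0 := fun h => hf0 (by rw [hC, h, map_zero])
        obtain ⟨c, hcne, rfl⟩ : ∃ c : K, c ≠ 0 ∧ f = MvPolynomial.C c :=
          ⟨MvPolynomial.coeff 0 f, hc0, hC⟩
        have hirr_le : irrIdeal K s ≤ I := by
          rw [irrIdeal, Ideal.span_le]
          rintro _ ⟨i, rfl⟩
          have hfx : MvPolynomial.C c * MvPolynomial.X i ∈ I := by
            have := Submodule.mem_colon.mp hfc _ (hXmem i)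
            rwa [smul_eq_mul] at this
          have h2 := I.mul_mem_left (MvPolynomial.C c⁻¹) hfx
          rwa [← mul_assoc, ← map_mul, inv_mul_cancel₀ hcne, map_one, one_mul] at h2
        exact absurd hIm (not_lt_of_ge hirr_le)
      · exact h
    refine ⟨hd1, f, hfd, irrIdeal K s, hmem, le_antisymm ?_ ?_⟩
    · intro g hg
      by_contra hgm
      have hc0 : MvPolynomial.coeff 0 g ≠ 0 := fun h => hgm ((mem_irr_iff g).mpr h)
      have hgf : g * f ∈ I := mem_colon_span_singleton.mp hg
      have hgC : g - MvPolynomial.C (MvPolynomial.coeff 0 g) ∈ irrIdeal K s := by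
        rw [mem_irr_iff]
        simp
      have hsub : f * (g - MvPolynomial.C (MvPolynomial.coeff 0 g)) ∈ I := by
        have := Submodule.mem_colon.mp hfc _ hgC
        rwa [smul_eq_mul] at this
      have hCf : MvPolynomial.C (MvPolynomial.coeff 0 g) * f ∈ I := by
        have : MvPolynomial.C (MvPolynomial.coeff 0 g) * f =
            g * f - f * (g - MvPolynomial.C (MvPolynomial.coeff 0 g)) := by ring
        rw [this]
        exact I.sub_mem hgf hsub
      have := I.mul_mem_left (MvPolynomial.C (MvPolynomial.coeff 0 g)⁻¹) hCf
      rw [← mul_assoc, ← map_mul, inv_mul_cancel₀ hc0, map_one, one_mul] at this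
      exact hfI this
    · intro g hg
      rw [mem_colon_span_singleton, mul_comm]
      have := Submodule.mem_colon.mp hfc _ hg
      rwa [smul_eq_mul] at this
  · rintro ⟨hd1, f, hfd, p, hpAss, hcolon⟩
    rw [hAss p hpAss] at hcolon
    have hfI : f ∉ I := by
      intro hf
      apply hm_ne_top
      rw [← hcolon]
      rw [eq_top_iff]
      intro r _
      rw [mem_colon_span_singleton]
      exact I.mul_mem_left r hf
    refine ⟨f, hfd, ?_, hfI⟩
    rw [Submodule.mem_colon]
    intro g hg
    rw [← hcolon] at hg
    have := mem_colon_span_singleton.mp hg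
    rwa [mul_comm] at this

end GMDPaper
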